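/- Let G be a finite group of order n, let M → N be a morphism of G-modules whose image is contained in nN, and assume N has no n-torsion. Then for all i ≥ 1 the induced map on group cohomology H^i(G,M) → H^i(G,N) is zero. -/

import Mathlib

section FinHelpers
variable {α : Type*} {n : ℕ}

lemma tail_snoc' (h : Fin (n + 1) → α) (s : α) :
    Fin.tail (Fin.snoc h s : Fin (n + 2) → α) = Fin.snoc (Fin.tail h) s := by
  funext i
  induction i using Fin.lastCases with
  | last => simp [Fin.tail, Fin.succ_last]
  | cast i => simp [Fin.tail, Fin.succ_castSucc, -Fin.castSucc_succ]

lemma contractNth_last' (op : α → α → α) (g : Fin (n + 2) → α) :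
    Fin.contractNth (Fin.last (n + 1)) op g = Fin.init g := by
  funext i
  rw [Fin.contractNth_apply_of_lt]
  · rfl
  · exact i.isLt

lemma contractNth_castSucc_snoc_of_lt (op : α → α → α) (k : Fin (n + 1)) (hk : (k : ℕ) < n)
    (h : Fin (n + 1) → α) (s : α) :
    Fin.contractNth k.castSucc op (Fin.snoc h s : Fin (n + 2) → α)
      = Fin.snoc (Fin.contractNth k op h) s := by
  funext i
  induction i using Fin.lastCases with
  | last =>
    rw [Fin.contractNth_apply_of_gt _ _ _ _ (by simp only [Fin.coe_castSucc, Fin.val_last]; omega),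
      Fin.succ_last]
    simp
  | cast i =>
    rcases lt_trichotomy (i : ℕ) (k : ℕ) with hik | hik | hik
    · rw [Fin.contractNth_apply_of_lt _ _ _ _ (by simpa using hik), Fin.snoc_castSucc,
        Fin.snoc_castSucc, Fin.contractNth_apply_of_lt _ _ _ _ hik]
    · rw [Fin.contractNth_apply_of_eq _ _ _ _ (by simpa using hik), Fin.snoc_castSucc,
        Fin.succ_castSucc, Fin.snoc_castSucc, Fin.snoc_castSucc,
        Fin.contractNth_apply_of_eq _ _ _ _ hik]
    · rw [Fin.contractNth_apply_of_gt _ _ _ _ (by simpa using hik), Fin.succ_castSucc,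
        Fin.snoc_castSucc, Fin.snoc_castSucc, Fin.contractNth_apply_of_gt _ _ _ _ hik]

lemma contractNth_castSucc_snoc_last (op : α → α → α) (h : Fin (n + 1) → α) (s : α) :
    Fin.contractNth (Fin.last n).castSucc op (Fin.snoc h s : Fin (n + 2) → α)
      = Fin.snoc (Fin.init h) (op (h (Fin.last n)) s) := by
  funext i
  induction i using Fin.lastCases with
  | last =>
    rw [Fin.contractNth_apply_of_eq _ _ _ _ (by simp), Fin.snoc_castSucc, Fin.succ_last,
      Fin.snoc_last, Fin.snoc_last]
  | cast i =>
    rw [Fin.contractNth_apply_of_lt _ _ _ _ (by simpa using i.isLt), Fin.snoc_castSucc,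
      Fin.snoc_castSucc]
    rfl
end FinHelpers

lemma hsmul_bridge {M : Type*} [AddCommGroup M] (h : Module ℤ M) (n : ℤ) (x : M) :
    @HSMul.hSMul ℤ M M (@instHSMul ℤ M (@SMulZeroClass.toSMul ℤ M _
      (@SMulWithZero.toSMulZeroClass ℤ M _ _ (@MulActionWithZero.toSMulWithZero ℤ M _ _
        (@Module.toMulActionWithZero ℤ M _ _ h))))) n x = n • x :=
  int_smul_eq_zsmul h n x

section Key
variable {G : Type} [Group G] [Fintype G]

lemma sum_contract (A : Rep ℤ G) {j : ℕ} (a : (Fin (j + 1) → G) → A)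
    (h : Fin (j + 1) → G) (k : Fin (j + 1)) :
    ∑ s : G, a (Fin.contractNth k.castSucc (· * ·) (Fin.snoc h s))
      = ∑ s : G, a (Fin.snoc (Fin.contractNth k (· * ·) h) s) := by
  rcases lt_or_eq_of_le (Nat.lt_succ_iff.mp k.isLt) with hk | hk
  · refine Finset.sum_congr rfl fun s _ => ?_
    rw [contractNth_castSucc_snoc_of_lt _ _ hk]
  · have hkl : k = Fin.last j := Fin.ext hk
    subst hkl
    have h1 : ∀ s : G, Fin.contractNth (Fin.last j).castSucc (· * ·) (Fin.snoc h s)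
        = Fin.snoc (Fin.init h) (h (Fin.last j) * s) := fun s =>
      contractNth_castSucc_snoc_last _ _ _
    have h2 : Fin.contractNth (Fin.last j) (· * ·) h = Fin.init h := by
      cases j with
      | zero =>
        funext i; exact absurd i.isLt (by omega)
      | succ m => exact contractNth_last' _ _
    simp_rw [h1, h2]
    exact Fintype.sum_equiv (Equiv.mulLeft (h (Fin.last j))) _ _ fun s => rfl

lemma key_homotopy (A : Rep ℤ G) {j : ℕ} (a : (Fin (j + 1) → G) → A)
    (ha : inhomogeneousCochains.d A (j + 1) a = 0) :
    inhomogeneousCochains.d A j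
        (fun u => (-1 : ℤ) ^ (j + 1) • ∑ s : G, a (Fin.snoc u s))
      = fun h => (Fintype.card G : ℤ) • a h := by
  have main : ∀ h : Fin (j + 1) → G,
      inhomogeneousCochains.d A j (fun u => ∑ s : G, a (Fin.snoc u s)) h
        + ((-1 : ℤ) ^ j * (Fintype.card G : ℤ)) • a h = 0 := by
    intro h
    have h0 : ∀ s : G, inhomogeneousCochains.d A (j + 1) a (Fin.snoc h s) = 0 := by
      intro s
      rw [ha]; rfl
    have hsum : (0 : A) = ∑ s : G, inhomogeneousCochains.d A (j + 1) a (Fin.snoc h s) := by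
      simp [h0]
    have e0 : ∀ s : G, (Fin.snoc h s : Fin (j + 2) → G) 0 = h 0 := fun s => by
      rw [show (0 : Fin (j + 2)) = Fin.castSucc 0 from rfl, Fin.snoc_castSucc]
    have e1 : ∀ s : G, (fun i : Fin (j + 1) => (Fin.snoc h s : Fin (j + 2) → G) i.succ)
        = Fin.snoc (Fin.tail h) s := fun s => tail_snoc' h s
    have step1 : (0 : A) = ∑ s : G,
        ((A.ρ (h 0)) (a (Fin.snoc (Fin.tail h) s))
          + ((∑ k : Fin (j + 1),
              (-1 : ℤ) ^ ((k : ℕ) + 1) • a (Fin.contractNth k.castSucc (· * ·) (Fin.snoc h s)))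
            + (-1 : ℤ) ^ (j + 1 + 1) • a h)) := by
      rw [hsum]
      refine Finset.sum_congr rfl fun s _ => ?_
      simp only [inhomogeneousCochains.d_hom_apply, hsmul_bridge]
      rw [e0 s, e1 s, Fin.sum_univ_castSucc, contractNth_last', Fin.init_snoc, Fin.val_last]
      simp only [Fin.coe_castSucc]
    have step2 : (0 : A) =
        (A.ρ (h 0)) (∑ s : G, a (Fin.snoc (Fin.tail h) s))
          + ((∑ k : Fin (j + 1),
              (-1 : ℤ) ^ ((k : ℕ) + 1) • ∑ s : G, a (Fin.snoc (Fin.contractNth k (· * ·) h) s))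
            + ((-1 : ℤ) ^ j * (Fintype.card G : ℤ)) • a h) := by
      rw [step1, Finset.sum_add_distrib, Finset.sum_add_distrib, ← map_sum, Finset.sum_comm]
      congr 1
      congr 1
      · refine Finset.sum_congr rfl fun k _ => ?_
        rw [← Finset.smul_sum, sum_contract]
      · rw [Finset.sum_const, Finset.card_univ]
        have hp : ((-1 : ℤ) ^ (j + 1 + 1)) = (-1 : ℤ) ^ j := by
          rw [pow_succ, pow_succ]; ring
        rw [hp, mul_smul, natCast_zsmul]
        exact (smul_comm _ _ _)
    simp only [inhomogeneousCochains.d_hom_apply, hsmul_bridge]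
    have : (fun i : Fin j => h i.succ) = Fin.tail h := rfl
    rw [this]
    rw [add_assoc]
    exact step2.symm
  funext h
  have hsm : (fun u : Fin j → G => (-1 : ℤ) ^ (j + 1) • ∑ s : G, a (Fin.snoc u s))
      = (-1 : ℤ) ^ (j + 1) • (fun u : Fin j → G => ∑ s : G, a (Fin.snoc u s)) := rfl
  have e : inhomogeneousCochains.d A j
        (fun u => (-1 : ℤ) ^ (j + 1) • ∑ s : G, a (Fin.snoc u s)) h
      = (-1 : ℤ) ^ (j + 1) •
        inhomogeneousCochains.d A j (fun u => ∑ s : G, a (Fin.snoc u s)) h := by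
    rw [hsm, map_zsmul]
    rfl
  rw [e]
  have hm : inhomogeneousCochains.d A j (fun u => ∑ s : G, a (Fin.snoc u s)) h
      = -(((-1 : ℤ) ^ j * (Fintype.card G : ℤ)) • a h) :=
    eq_neg_of_add_eq_zero_left (main h)
  rw [hm, smul_neg, smul_smul]
  have hsc : ((-1 : ℤ) ^ (j + 1) * ((-1 : ℤ) ^ j * (Fintype.card G : ℤ)))
      = -(Fintype.card G : ℤ) := by
    have h2 : ((-1 : ℤ) ^ (j + 1) * (-1 : ℤ) ^ j) = -1 := by
      rw [← pow_add, show j + 1 + j = 2 * j + 1 by ring, pow_succ, pow_mul]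
      norm_num
    rw [← mul_assoc, h2]
    ring
  rw [hsc, neg_smul, neg_neg]
end Key

/-- Let `G` be a finite group of order `n`, let `f : M ⟶ N` be a morphism of
`G`-modules whose image is contained in `n • N`, and assume `N` has no `n`-torsion.  Then for all
`i ≥ 1` the induced map on group cohomology `Hⁱ(G,M) → Hⁱ(G,N)` is zero; concretely, every
`i`-cocycle of `M` (with `i = j + 1 ≥ 1`) is sent by `f` to an `i`-coboundary of `N`. -/
theorem stmt0 {G : Type} [Group G] [Fintype G] (M N : Rep ℤ G) (f : M ⟶ N)
    (hvanish : ∀ m : M, ∃ x : N, f.hom m = (Fintype.card G : ℤ) • x)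
    (htf : ∀ x : N, (Fintype.card G : ℤ) • x = 0 → x = 0)
    (j : ℕ) (c : (Fin (j + 1) → G) → M)
    (hc : inhomogeneousCochains.d M (j + 1) c = 0) :
    ∃ b : (Fin j → G) → N,
      inhomogeneousCochains.d N j b = fun g => f.hom (c g) := by
  classical
  choose x hx using fun g => hvanish (c g)
  have hcomm : inhomogeneousCochains.d N (j + 1) (fun g => f.hom (c g))
      = fun g => f.hom (inhomogeneousCochains.d M (j + 1) c g) := by
    funext g
    simp only [inhomogeneousCochains.d_hom_apply, hsmul_bridge, map_add, map_sum, map_zsmul]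
    congr 1
    exact (Rep.hom_comm_apply f (g 0) _).symm
  have hfc : inhomogeneousCochains.d N (j + 1) (fun g => f.hom (c g)) = 0 := by
    rw [hcomm, hc]
    funext g
    exact map_zero _
  have hdx : inhomogeneousCochains.d N (j + 1) x = 0 := by
    funext g
    refine htf _ ?_
    have h1 : inhomogeneousCochains.d N (j + 1) (fun g' => (Fintype.card G : ℤ) • x g')
        = (Fintype.card G : ℤ) • inhomogeneousCochains.d N (j + 1) x := by
      rw [show (fun g' => (Fintype.card G : ℤ) • x g') = (Fintype.card G : ℤ) • x from rfl,
        map_zsmul]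
    have h2 : (fun g' => (Fintype.card G : ℤ) • x g') = fun g' => f.hom (c g') := by
      funext g'
      exact (hx g').symm
    calc (Fintype.card G : ℤ) • inhomogeneousCochains.d N (j + 1) x g
        = ((Fintype.card G : ℤ) • inhomogeneousCochains.d N (j + 1) x) g := rfl
      _ = inhomogeneousCochains.d N (j + 1) (fun g' => (Fintype.card G : ℤ) • x g') g := by
          rw [h1]
      _ = inhomogeneousCochains.d N (j + 1) (fun g' => f.hom (c g')) g := by rw [h2]
      _ = 0 := by rw [hfc]; rfl
  refine ⟨fun u => (-1 : ℤ) ^ (j + 1) • ∑ s : G, x (Fin.snoc u s), ?_⟩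
  rw [key_homotopy N x hdx]
  funext g
  exact (hx g).symm
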